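/- arXiv:1708.05802 — 2 statements merged into one kernel-verified Lean document; each statement's English description precedes it below -/
import Mathlib

section
/- With notation as above, the subspace so(V₀) ⊕ (V₀ ⊗ V₁) generates so(V) as a Lie algebra; in particular no proper Lie subalgebra of so(V) contains both so(V₀) and all of V₀ ⊗ V₁. -/
open Module

attribute [local instance 100] LieRing.ofAssociativeRing

/-- The bilinear form `B` has signature `(p, q)`. -/
def HasSignature {V : Type*} [AddCommGroup V] [Module ℝ V]
    (B : LinearMap.BilinForm ℝ V) (p q : ℕ) : Prop :=
  ∃ b : Basis (Fin p ⊕ Fin q) ℝ V,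
    (∀ i, B (b (Sum.inl i)) (b (Sum.inl i)) = 1) ∧
    (∀ j, B (b (Sum.inr j)) (b (Sum.inr j)) = -1) ∧
    (∀ i j, i ≠ j → B (b i) (b j) = 0)

/-- `f` is skew-adjoint with respect to `B`. -/
def IsSkew {V : Type*} [AddCommGroup V] [Module ℝ V]
    (B : LinearMap.BilinForm ℝ V) (f : Module.End ℝ V) : Prop :=
  ∀ x y : V, B (f x) y = - B x (f y)

/-- The copy of `so(W^⊥)` inside `so(V)`: skew endomorphisms vanishing on `W`. -/
def soTriv {V : Type*} [AddCommGroup V] [Module ℝ V]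
    (B : LinearMap.BilinForm ℝ V) (W : Submodule ℝ V) : Set (Module.End ℝ V) :=
  {f | IsSkew B f ∧ ∀ x ∈ W, f x = 0}

/-- The skew endomorphism `x ↦ B(v₀,x) v₁ - B(v₁,x) v₀` attached to `v₀ ⊗ v₁`. -/
noncomputable def tensorSkew {V : Type*} [AddCommGroup V] [Module ℝ V]
    (B : LinearMap.BilinForm ℝ V) (v₀ v₁ : V) : Module.End ℝ V :=
  (LinearMap.toSpanSingleton ℝ V v₁).comp (B v₀) - (LinearMap.toSpanSingleton ℝ V v₀).comp (B v₁)

section helpers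
variable {V : Type*} [AddCommGroup V] [Module ℝ V] (B : LinearMap.BilinForm ℝ V)

lemma tensorSkew_apply (v₀ v₁ x : V) :
    tensorSkew B v₀ v₁ x = B v₀ x • v₁ - B v₁ x • v₀ := by
  simp [tensorSkew, LinearMap.toSpanSingleton_apply]

lemma tensorSkew_isSkew (hsymm : B.IsSymm) (u v : V) : IsSkew B (tensorSkew B u v) := by
  intro x y
  have h1 := hsymm.eq x u
  have h2 := hsymm.eq x v
  simp only [tensorSkew_apply, map_sub, map_smul, LinearMap.sub_apply, LinearMap.smul_apply,
    smul_eq_mul] at *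
  rw [← h1, ← h2]
  ring

lemma tensorSkew_neg_swap (u v : V) : tensorSkew B u v = - tensorSkew B v u := by
  ext x; simp only [tensorSkew_apply, LinearMap.neg_apply, neg_sub]

lemma tensorSkew_self (u : V) : tensorSkew B u u = 0 := by
  ext x; simp [tensorSkew_apply]

lemma mem_skewAdjoint_iff (f : Module.End ℝ V) :
    f ∈ skewAdjointLieSubalgebra B ↔ IsSkew B f := by
  have : f ∈ skewAdjointLieSubalgebra B ↔ f ∈ B.skewAdjointSubmodule := Iff.rfl
  rw [this, LinearMap.mem_skewAdjointSubmodule]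
  constructor
  · intro h x y; simpa using h x y
  · intro h x y; simpa using h x y

lemma bracket_tensorSkew (hsymm : B.IsSymm) (v e₁ e₂ : V)
    (h1 : B v e₁ = 0) (h2 : B v e₂ = 0) (h12 : B e₁ e₂ = 0) :
    ⁅tensorSkew B v e₁, tensorSkew B v e₂⁆ = B v v • tensorSkew B e₁ e₂ := by
  have h1' : B e₁ v = 0 := by rw [← hsymm.eq v e₁, h1]
  have h2' : B e₂ v = 0 := by rw [← hsymm.eq v e₂, h2]
  have h12' : B e₂ e₁ = 0 := by rw [← hsymm.eq e₁ e₂, h12]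
  ext x
  rw [LieRing.of_associative_ring_bracket]
  simp only [LinearMap.sub_apply, Module.End.mul_apply, LinearMap.smul_apply,
    tensorSkew_apply, map_sub, map_smul, smul_eq_mul, smul_sub, smul_smul,
    h1, h2, h12, h1', h2', h12', mul_zero, zero_smul, sub_zero, zero_sub, mul_comm]
  module

end helpers

section span
variable {V : Type*} [AddCommGroup V] [Module ℝ V] (B : LinearMap.BilinForm ℝ V)

set_option maxHeartbeats 1000000 in
lemma skew_mem_span_tensorSkew {ι : Type*} [Fintype ι] [DecidableEq ι]
    (hsymm : B.IsSymm) (hnd : B.Nondegenerate) (b : Basis ι ℝ V)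
    (horth : ∀ i j, i ≠ j → B (b i) (b j) = 0)
    (hne : ∀ i, B (b i) (b i) ≠ 0)
    (f : Module.End ℝ V) (hf : IsSkew B f) :
    f ∈ Submodule.span ℝ (Set.range fun p : ι × ι => tensorSkew B (b p.1) (b p.2)) := by
  classical
  have hs : ∀ x y : V, B x y = B y x := fun x y => by
    have := hsymm.eq x y; simpa using this
  set c : ι → ℝ := fun i => B (b i) (b i) with hc
  set a : ι → ι → ℝ := fun i j => B (f (b i)) (b j) with ha
  have haskew : ∀ k l, a l k = - a k l := by
    intro k l
    show B (f (b l)) (b k) = - B (f (b k)) (b l)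
    rw [hf (b l) (b k), hs (b l) (f (b k))]
  have hBa : ∀ i k, B (b i) (b k) = if i = k then c i else 0 := by
    intro i k
    by_cases h : i = k
    · subst h; rw [if_pos rfl]
    · rw [if_neg h]; exact horth i k h
  set t : ι → ι → ℝ := fun i j => a i j / (2 * c i * c j) with ht
  set S : Module.End ℝ V :=
    ∑ p : ι × ι, t p.1 p.2 • tensorSkew B (b p.1) (b p.2) with hS
  have hSmem : S ∈ Submodule.span ℝ
      (Set.range fun p : ι × ι => tensorSkew B (b p.1) (b p.2)) := by
    refine Submodule.sum_mem _ fun p _ => Submodule.smul_mem _ _ ?_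
    exact Submodule.subset_span ⟨p, rfl⟩
  have hfS : f = S := by
    refine b.ext fun k => ?_
    have key : ∀ l, B (S (b k)) (b l) = a k l := by
      intro l
      have hSkl : B (S (b k)) (b l)
          = ∑ p : ι × ι, t p.1 p.2 *
              (B (b p.1) (b k) * B (b p.2) (b l) - B (b p.1) (b l) * B (b p.2) (b k)) := by
        rw [hS, LinearMap.sum_apply, map_sum, LinearMap.sum_apply]
        refine Finset.sum_congr rfl fun p _ => ?_
        simp only [LinearMap.smul_apply, tensorSkew_apply, map_sub, map_smul,
          LinearMap.sub_apply, smul_eq_mul]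
        rw [hs (b p.1) (b k), hs (b p.2) (b k)]
        ring
      have hterm : ∀ p : ι × ι, t p.1 p.2 *
              (B (b p.1) (b k) * B (b p.2) (b l) - B (b p.1) (b l) * B (b p.2) (b k))
          = (if p = (k, l) then t p.1 p.2 * (c p.1 * c p.2) else 0)
            - (if p = (l, k) then t p.1 p.2 * (c p.1 * c p.2) else 0) := by
        rintro ⟨i, j⟩
        rw [hBa i k, hBa j l, hBa i l, hBa j k]
        simp only [ite_zero_mul_ite_zero, mul_sub, mul_ite_zero, Prod.mk.injEq]
        by_cases h1 : i = k <;> by_cases h2 : j = l <;> by_cases h3 : i = l <;>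
          by_cases h4 : j = k <;> simp [h1, h2, h3, h4, ite_and] <;>
          rcases eq_or_ne l k with h5 | h5 <;> simp [h5]
      have hsum : B (S (b k)) (b l) = t k l * (c k * c l) - t l k * (c l * c k) := by
        rw [hSkl, Finset.sum_congr rfl fun p _ => hterm p, Finset.sum_sub_distrib]
        rw [Fintype.sum_ite_eq' ((k, l) : ι × ι)
            (fun p : ι × ι => t p.1 p.2 * (c p.1 * c p.2)),
          Fintype.sum_ite_eq' ((l, k) : ι × ι)
            (fun p : ι × ι => t p.1 p.2 * (c p.1 * c p.2))]
      have hck : c k ≠ 0 := hne k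
      have hcl : c l ≠ 0 := hne l
      rw [hsum, ht]
      simp only []
      rw [haskew k l]
      field_simp
      ring
    have hzero : ∀ l, B (f (b k) - S (b k)) (b l) = 0 := by
      intro l
      rw [map_sub, LinearMap.sub_apply, key l]
      show a k l - a k l = 0
      ring
    have hfun : B (f (b k) - S (b k)) = 0 := b.ext fun l => by simpa using hzero l
    have := hnd.1 _ (fun y => by rw [hfun]; rfl)
    exact sub_eq_zero.mp this
  rw [hfS]; exact hSmem

end span

set_option maxHeartbeats 1000000 in
/-- the subspace `so(V₀) ⊕ (V₀ ⊗ V₁)` generates `so(V)` as a Lie algebra;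
in particular no proper Lie subalgebra of `so(V)` contains both `so(V₀)` and
all of `V₀ ⊗ V₁`. -/
theorem so_generated_by_soV0_and_tensor
    {V : Type*} [AddCommGroup V] [Module ℝ V] [FiniteDimensional ℝ V]
    (B : LinearMap.BilinForm ℝ V) (p q : ℕ)
    (hsig : HasSignature B p q) (hrank : 3 ≤ p + q)
    (hsymm : B.IsSymm) (hnd : B.Nondegenerate)
    (V₁ : Submodule ℝ V) (hdim : Module.finrank ℝ V₁ = 2)
    (hpos : ∀ w ∈ V₁, w ≠ 0 → 0 < B w w)
    (V₀ : Submodule ℝ V) (hV₀ : V₀ = B.orthogonal V₁)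
    (Tens : Set (Module.End ℝ V))
    (hTens : Tens = {f | ∃ v₀ ∈ V₀, ∃ v₁ ∈ V₁, f = tensorSkew B v₀ v₁}) :
    LieSubalgebra.lieSpan ℝ (Module.End ℝ V) (soTriv B V₁ ∪ Tens)
        = skewAdjointLieSubalgebra B ∧
    ∀ g : LieSubalgebra ℝ (Module.End ℝ V),
      soTriv B V₁ ⊆ g → Tens ⊆ g → skewAdjointLieSubalgebra B ≤ g := by
  classical
  have hs : ∀ x y : V, B x y = B y x := fun x y => by simpa using hsymm.eq x y
  have horthV : ∀ x ∈ V₀, ∀ y ∈ V₁, B x y = 0 := by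
    intro x hx y hy
    rw [hV₀, LinearMap.BilinForm.mem_orthogonal_iff] at hx
    rw [hs]; exact hx y hy
  obtain ⟨bsig, -, -, -⟩ := hsig
  have hfinV : finrank ℝ V = p + q := by
    rw [finrank_eq_card_basis bsig]; simp
  have hV₁nd : (B.restrict V₁).Nondegenerate := by
    refine (LinearMap.IsRefl.nondegenerate_iff_separatingLeft (B := B.restrict V₁)
      (fun x y h => by simpa [hs] using h)).mpr ?_
    rintro ⟨x, hx⟩ h
    have hx0 : B x x = 0 := by simpa using h ⟨x, hx⟩
    by_contra hne0
    have hxne : x ≠ 0 := by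
      intro h0
      exact hne0 (by simp [Subtype.ext_iff, h0])
    exact absurd hx0 (ne_of_gt (hpos x hx hxne))
  have hcompl : IsCompl V₁ V₀ := by
    rw [hV₀]; exact B.isCompl_orthogonal_of_restrict_nondegenerate hsymm.isRefl hV₁nd
  have hcompl' : IsCompl V₀ V₁ := hcompl.symm
  have hfr : finrank ℝ V₀ + finrank ℝ V₁ = finrank ℝ V :=
    Submodule.finrank_add_eq_of_isCompl hcompl'
  have hfr0 : 1 ≤ finrank ℝ V₀ := by omega
  have hV₀nd : (B.restrict V₀).Nondegenerate := by
    refine (LinearMap.IsRefl.nondegenerate_iff_separatingLeft (B := B.restrict V₀)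
      (fun x y h => by simpa [hs] using h)).mpr ?_
    rintro ⟨x, hx⟩ h
    have hxy : ∀ y : V, B x y = 0 := by
      intro y
      have hy : y ∈ V₀ ⊔ V₁ := by rw [hcompl'.sup_eq_top]; trivial
      obtain ⟨y₀, hy₀, y₁, hy₁, rfl⟩ := Submodule.mem_sup.mp hy
      have h0 : B x y₀ = 0 := by simpa using h ⟨y₀, hy₀⟩
      have h1 : B x y₁ = 0 := horthV x hx y₁ hy₁
      rw [map_add, h0, h1, add_zero]
    exact Subtype.ext (hnd.1 x hxy)
  have hsymm₀ : (B.restrict V₀).IsSymm := ⟨fun x y => by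
    simpa using hsymm.eq (x : V) (y : V)⟩
  have hsymm₁ : (B.restrict V₁).IsSymm := ⟨fun x y => by
    simpa using hsymm.eq (x : V) (y : V)⟩
  haveI : Invertible (2 : ℝ) := invertibleOfNonzero two_ne_zero
  obtain ⟨b₀, hb₀⟩ := LinearMap.BilinForm.exists_orthogonal_basis (LinearMap.BilinForm.isSymm_iff.mp hsymm₀)
  obtain ⟨b₁, hb₁⟩ := LinearMap.BilinForm.exists_orthogonal_basis (LinearMap.BilinForm.isSymm_iff.mp hsymm₁)
  have hb₀ne : ∀ i, B (b₀ i : V) (b₀ i : V) ≠ 0 := by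
    intro i h0
    have hfun : (B.restrict V₀) (b₀ i) = 0 := by
      refine b₀.ext fun j => ?_
      rcases eq_or_ne i j with rfl | hij
      · simpa using h0
      · simpa using hb₀ hij
    have : b₀ i = 0 := hV₀nd.1 (b₀ i) fun y => by rw [hfun]; rfl
    exact b₀.ne_zero i this
  have hb₁pos : ∀ i, 0 < B (b₁ i : V) (b₁ i : V) := by
    intro i
    refine hpos _ (b₁ i).2 ?_
    intro h0
    exact b₁.ne_zero i (Subtype.ext h0)
  let e := Submodule.prodEquivOfIsCompl V₀ V₁ hcompl'
  let bb := (b₀.prod b₁).map e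
  have hbbl : ∀ i, bb (Sum.inl i) = (b₀ i : V) := by
    intro i
    show e ((b₀.prod b₁) (Sum.inl i)) = (b₀ i : V)
    rw [Submodule.coe_prodEquivOfIsCompl', Basis.prod_apply_inl_fst,
      Basis.prod_apply_inl_snd]
    simp
  have hbbr : ∀ i, bb (Sum.inr i) = (b₁ i : V) := by
    intro i
    show e ((b₀.prod b₁) (Sum.inr i)) = (b₁ i : V)
    rw [Submodule.coe_prodEquivOfIsCompl', Basis.prod_apply_inr_fst,
      Basis.prod_apply_inr_snd]
    simp
  have horth : ∀ i j, i ≠ j → B (bb i) (bb j) = 0 := by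
    rintro (i | i) (j | j) hij
    · rw [hbbl, hbbl]
      have : i ≠ j := fun h => hij (by rw [h])
      simpa using hb₀ this
    · rw [hbbl, hbbr]; exact horthV _ (b₀ i).2 _ (b₁ j).2
    · rw [hbbr, hbbl, hs]; exact horthV _ (b₀ j).2 _ (b₁ i).2
    · rw [hbbr, hbbr]
      have : i ≠ j := fun h => hij (by rw [h])
      simpa using hb₁ this
  have hdiag : ∀ i, B (bb i) (bb i) ≠ 0 := by
    rintro (i | i)
    · rw [hbbl]; exact hb₀ne i
    · rw [hbbr]; exact ne_of_gt (hb₁pos i)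
  set L := LieSubalgebra.lieSpan ℝ (Module.End ℝ V) (soTriv B V₁ ∪ Tens) with hL
  -- a vector in V₀ with nonzero norm
  set v : V := (b₀ ⟨0, hfr0⟩ : V) with hv
  have hvmem : v ∈ V₀ := (b₀ ⟨0, hfr0⟩).2
  have hvne : B v v ≠ 0 := hb₀ne _
  have hgen : ∀ i j, tensorSkew B (bb i) (bb j) ∈ L := by
    have hsoTriv : ∀ x ∈ V₀, ∀ y ∈ V₀, tensorSkew B x y ∈ soTriv B V₁ := by
      intro x hx y hy
      refine ⟨tensorSkew_isSkew B hsymm x y, fun w hw => ?_⟩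
      rw [tensorSkew_apply, horthV x hx w hw, horthV y hy w hw]
      simp
    have hTensMem : ∀ x ∈ V₀, ∀ y ∈ V₁, tensorSkew B x y ∈ Tens := by
      intro x hx y hy
      rw [hTens]
      exact ⟨x, hx, y, hy, rfl⟩
    rintro (i | i) (j | j)
    · exact LieSubalgebra.subset_lieSpan
        (Set.mem_union_left _ (by rw [hbbl, hbbl]; exact hsoTriv _ (b₀ i).2 _ (b₀ j).2))
    · exact LieSubalgebra.subset_lieSpan
        (Set.mem_union_right _ (by rw [hbbl, hbbr]; exact hTensMem _ (b₀ i).2 _ (b₁ j).2))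
    · rw [hbbr, hbbl, tensorSkew_neg_swap]
      exact neg_mem (LieSubalgebra.subset_lieSpan
        (Set.mem_union_right _ (hTensMem _ (b₀ j).2 _ (b₁ i).2)))
    · rcases eq_or_ne i j with rfl | hij
      · rw [tensorSkew_self]; exact L.zero_mem
      · rw [hbbr, hbbr]
        have hb12 : B (b₁ i : V) (b₁ j : V) = 0 := by
          have : (i : Fin (finrank ℝ V₁)) ≠ j := hij
          simpa using hb₁ this
        have hident := bracket_tensorSkew B hsymm v (b₁ i : V) (b₁ j : V)
          (horthV v hvmem _ (b₁ i).2) (horthV v hvmem _ (b₁ j).2) hb12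
        have : tensorSkew B (b₁ i : V) (b₁ j : V)
            = (B v v)⁻¹ • ⁅tensorSkew B v (b₁ i : V), tensorSkew B v (b₁ j : V)⁆ := by
          rw [hident, smul_smul, inv_mul_cancel₀ hvne, one_smul]
        rw [this]
        refine L.smul_mem _ (L.lie_mem ?_ ?_)
        · exact LieSubalgebra.subset_lieSpan
            (Set.mem_union_right _ (hTensMem v hvmem _ (b₁ i).2))
        · exact LieSubalgebra.subset_lieSpan
            (Set.mem_union_right _ (hTensMem v hvmem _ (b₁ j).2))
  have key : L = skewAdjointLieSubalgebra B := by
    apply le_antisymm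
    · rw [hL, LieSubalgebra.lieSpan_le]
      rintro f (hf | hf)
      · exact (mem_skewAdjoint_iff B f).mpr hf.1
      · rw [hTens] at hf
        obtain ⟨v₀, -, v₁, -, rfl⟩ := hf
        exact (mem_skewAdjoint_iff B _).mpr (tensorSkew_isSkew B hsymm v₀ v₁)
    · intro f hf
      have hfsk : IsSkew B f := (mem_skewAdjoint_iff B f).mp hf
      have hspan := skew_mem_span_tensorSkew B hsymm hnd bb horth hdiag f hfsk
      have hle : Submodule.span ℝ
          (Set.range fun pr : (Fin (finrank ℝ V₀) ⊕ Fin (finrank ℝ V₁)) ×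
            (Fin (finrank ℝ V₀) ⊕ Fin (finrank ℝ V₁)) => tensorSkew B (bb pr.1) (bb pr.2))
          ≤ (L : Submodule ℝ (Module.End ℝ V)) := by
        rw [Submodule.span_le]
        rintro x ⟨pr, rfl⟩
        exact hgen pr.1 pr.2
      exact (LieSubalgebra.mem_toSubmodule (L' := L)).mp (hle hspan)
  refine ⟨key, fun g hg1 hg2 => ?_⟩
  rw [← key, hL]
  exact LieSubalgebra.lieSpan_le.mpr (Set.union_subset hg1 hg2)
end

section
/- Let W be a real quadratic space of signature (1,2) and let {s_i} be a family of vectors with q(s_i, s_i) < 0 such that all s_i are orthogonal to a fixed nonzero vector t ∈ W with q(t,t) ≥ 0. Then every connected component of P(Pos(W)) \ ∪ᵢ P(s_i^⊥) contains in its closure an open arc of the boundary circle ∂P(Pos(W)), provided the family of hyperplanes s_i^⊥ is locally finite on Pos(W). -/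
open Metric

local notation "E" => EuclideanSpace ℝ (Fin 2)

/-- in the Klein disk `D = P(Pos(W))` of a quadratic space `W` of
signature `(1,2)`, consider a locally finite family of geodesics traced by the
hyperplanes `s_i^⊥` with `q(s_i,s_i) < 0`, all orthogonal to a fixed nonzero vector
`t` with `q(t,t) ≥ 0`.  (In disk coordinates a vector `s = (c, n)` with `|c| < ‖n‖`
traces the chord `{u ∈ D : ⟪u, n⟫ = c}`.)  Then every connected component of the
complement `D \ ⋃ᵢ s_i^⊥` contains in its closure an open arc of the boundary
circle. -/
theorem components_have_round_boundary_bits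
    {ι : Type*} (s : ι → ℝ × E)
    -- each `s i` is a negative vector whose orthogonal traces a geodesic of the disk :
    (hneg : ∀ i, |(s i).1| < ‖(s i).2‖)
    -- the fixed vector `t`, nonzero with `q(t,t) ≥ 0` :
    (t : ℝ × E) (ht0 : t ≠ 0) (ht : ‖t.2‖ ≤ |t.1|)
    -- all `s i` are orthogonal to `t` for the signature `(1,2)` form :
    (horth : ∀ i, (s i).1 * t.1 = inner ℝ (s i).2 t.2)
    -- the geodesics, as subsets of the open disk :
    (H : ι → Set E)
    (hH : ∀ i, H i = {u ∈ ball (0 : E) 1 | (inner ℝ u (s i).2 : ℝ) = (s i).1})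
    -- local finiteness of the family of geodesics on the disk :
    (hlf : ∀ u ∈ ball (0 : E) 1, ∃ r > 0, {i | ∃ w ∈ ball u r, w ∈ H i}.Finite) :
    -- every connected component of the complement has a round boundary bit :
    ∀ u ∈ ball (0 : E) 1 \ ⋃ i, H i,
      ∃ z ∈ sphere (0 : E) 1, ∃ ε > 0, ∀ w ∈ sphere (0 : E) 1, ‖w - z‖ < ε →
        w ∈ closure (connectedComponentIn (ball (0 : E) 1 \ ⋃ i, H i) u) := by
  intro u hu
  have hu1 : ‖u‖ < 1 := mem_ball_zero_iff.mp hu.1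
  have hu2 : ∀ i, (inner ℝ u (s i).2 : ℝ) ≠ (s i).1 := by
    intro i hi
    exact hu.2 (Set.mem_iUnion.mpr ⟨i, by rw [hH i]; exact ⟨hu.1, hi⟩⟩)
  have ht1 : t.1 ≠ 0 := by
    intro h
    apply ht0
    have h2 : ‖t.2‖ ≤ 0 := by rw [h] at ht; simpa using ht
    have h3 : t.2 = 0 := by
      simpa using le_antisymm h2 (norm_nonneg _)
    exact Prod.ext h h3
  -- the common point `p` of all the geodesic lines, in the closed disk
  obtain ⟨p, hpnorm, hpline⟩ :
      ∃ p : E, ‖p‖ ≤ 1 ∧ ∀ i, (inner ℝ p (s i).2 : ℝ) = (s i).1 := by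
    refine ⟨t.1⁻¹ • t.2, ?_, ?_⟩
    · rw [norm_smul, norm_inv, Real.norm_eq_abs, inv_mul_le_iff₀ (abs_pos.mpr ht1)]
      simpa using ht
    · intro i
      have h := horth i
      rw [real_inner_smul_left, real_inner_comm, ← h]
      field_simp
  by_cases hup : u = p
  · -- then no geodesics exist at all
    have hempty : IsEmpty ι := ⟨fun i => hu2 i (by rw [hup]; exact hpline i)⟩
    have hU : (⋃ i, H i) = (∅ : Set E) := Set.iUnion_of_empty H
    refine ⟨EuclideanSpace.single 0 1, ?_, 1, one_pos, ?_⟩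
    · rw [mem_sphere_zero_iff_norm, EuclideanSpace.norm_single]
      simp
    · intro w hw _
      have hcc : connectedComponentIn (ball (0:E) 1 \ ⋃ i, H i) u = ball (0:E) 1 := by
        rw [hU, Set.diff_empty]
        exact (convex_ball (0:E) 1).isPreconnected.connectedComponentIn hu.1
      rw [hcc, closure_ball (0:E) one_ne_zero]
      exact sphere_subset_closedBall hw
  · have hd : u - p ≠ 0 := sub_ne_zero.mpr hup
    have hdn : 0 < ‖u - p‖ := norm_pos_iff.mpr hd
    obtain ⟨r, hr, hF⟩ := hlf u hu.1
    set F := {i | ∃ w ∈ ball u r, w ∈ H i} with hF_def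
    -- a small ball around u avoiding all the lines entirely
    set V : Set E := ball u (min r (1 - ‖u‖)) ∩
        ⋂ i ∈ F, {x : E | (inner ℝ x (s i).2 : ℝ) ≠ (s i).1} with hV_def
    have hVopen : IsOpen V := by
      refine isOpen_ball.inter (hF.isOpen_biInter fun i _ => ?_)
      exact isOpen_ne_fun (Continuous.inner continuous_id continuous_const) continuous_const
    have huV : u ∈ V := by
      refine ⟨mem_ball_self (lt_min hr (by linarith)), ?_⟩
      exact Set.mem_iInter₂.mpr fun i _ => hu2 i
    obtain ⟨δ, hδ, hballV⟩ := Metric.isOpen_iff.mp hVopen u huV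
    -- the ball of radius δ around u avoids every line
    have hB : ∀ x ∈ ball u δ, ∀ i, (inner ℝ x (s i).2 : ℝ) ≠ (s i).1 := by
      intro x hx i hxi
      have hxV := hballV hx
      by_cases hiF : i ∈ F
      · exact Set.mem_iInter₂.mp hxV.2 i hiF hxi
      · apply hiF
        have hx1 : dist x u < min r (1 - ‖u‖) := mem_ball.mp hxV.1
        have hxr : x ∈ ball u r := mem_ball.mpr (lt_of_lt_of_le hx1 (min_le_left _ _))
        have hx01 : x ∈ ball (0:E) 1 := by
          rw [mem_ball_zero_iff]
          have h1 : dist x u < 1 - ‖u‖ := lt_of_lt_of_le hx1 (min_le_right _ _)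
          have h2 : ‖x‖ ≤ ‖x - u‖ + ‖u‖ := by
            have := norm_add_le (x - u) u
            simpa using this
          rw [dist_eq_norm] at h1
          linarith
        exact ⟨x, hxr, by rw [hH i]; exact ⟨hx01, hxi⟩⟩
    -- the exit point of the ray from p through u
    obtain ⟨σ, hσpos, hσ⟩ : ∃ σ : ℝ, 0 < σ ∧ ‖p + σ • (u - p)‖ = 1 := by
      have hfc : Continuous fun a : ℝ => ‖p + a • (u - p)‖ :=
        (continuous_const.add (continuous_id.smul continuous_const)).norm
      have hbig : ∀ S : ℝ, 0 ≤ S → 1 + ‖p‖ ≤ S * ‖u - p‖ → 1 ≤ ‖p + S • (u - p)‖ := by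
        intro S hS0 hSbig
        have h1 : ‖S • (u - p)‖ ≤ ‖p + S • (u - p)‖ + ‖p‖ := by
          have := norm_sub_le (p + S • (u - p)) p
          simpa using this
        rw [norm_smul, Real.norm_eq_abs, abs_of_nonneg hS0] at h1
        linarith
      have hq : 0 ≤ (1 + ‖p‖) / ‖u - p‖ := by positivity
      have hS1 : (1:ℝ) ≤ (1 + ‖p‖) / ‖u - p‖ + 1 := by linarith
      have hSbig : 1 + ‖p‖ ≤ ((1 + ‖p‖) / ‖u - p‖ + 1) * ‖u - p‖ := by
        rw [add_mul, div_mul_cancel₀ _ (ne_of_gt hdn), one_mul]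
        linarith
      have hfS : 1 ≤ ‖p + ((1 + ‖p‖) / ‖u - p‖ + 1) • (u - p)‖ :=
        hbig _ (by linarith) hSbig
      have hf1 : ‖p + (1:ℝ) • (u - p)‖ = ‖u‖ := by
        congr 1
        module
      have hmem : (1:ℝ) ∈ Set.Icc (‖p + (1:ℝ) • (u - p)‖)
          (‖p + ((1 + ‖p‖) / ‖u - p‖ + 1) • (u - p)‖) := ⟨by rw [hf1]; exact hu1.le, hfS⟩
      obtain ⟨σ, hσmem, hσ⟩ := intermediate_value_Icc hS1 hfc.continuousOn hmem
      exact ⟨σ, lt_of_lt_of_le one_pos hσmem.1, hσ⟩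
    set z : E := p + σ • (u - p) with hz_def
    -- the open cone from p over ball u δ
    set K : Set E := {y : E | ∃ a : ℝ, 0 < a ∧ y ∈ ball (p + a • (u - p)) (a * δ)} with hK_def
    have hKopen : IsOpen K := by
      rw [Metric.isOpen_iff]
      rintro y ⟨a, ha, hy⟩
      rw [mem_ball] at hy
      refine ⟨a * δ - dist y (p + a • (u - p)), by linarith, ?_⟩
      intro w hw
      rw [mem_ball] at hw
      refine ⟨a, ha, ?_⟩
      rw [mem_ball]
      have := dist_triangle w y (p + a • (u - p))
      linarith
    have hKconv : Convex ℝ K := by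
      rintro y₁ ⟨a₁, ha₁, hy₁⟩ y₂ ⟨a₂, ha₂, hy₂⟩ c₁ c₂ hc₁ hc₂ hc
      have hpos : 0 < c₁ * a₁ + c₂ * a₂ := by
        rcases eq_or_lt_of_le hc₁ with h | h
        · have hc₂' : c₂ = 1 := by linarith
          rw [← h, hc₂']; simpa using ha₂
        · nlinarith
      refine ⟨c₁ * a₁ + c₂ * a₂, hpos, ?_⟩
      rw [mem_ball, dist_eq_norm] at hy₁ hy₂ ⊢
      have key : c₁ • y₁ + c₂ • y₂ - (p + (c₁ * a₁ + c₂ * a₂) • (u - p)) =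
          c₁ • (y₁ - (p + a₁ • (u - p))) + c₂ • (y₂ - (p + a₂ • (u - p))) := by
        have hp' : (1:ℝ) • p = c₁ • p + c₂ • p := by rw [← add_smul, hc]
        rw [one_smul] at hp'
        nth_rewrite 1 [hp']
        module
      rw [key]
      have hn1 : ‖c₁ • (y₁ - (p + a₁ • (u - p)))‖ = c₁ * ‖y₁ - (p + a₁ • (u - p))‖ := by
        rw [norm_smul, Real.norm_eq_abs, abs_of_nonneg hc₁]
      have hn2 : ‖c₂ • (y₂ - (p + a₂ • (u - p)))‖ = c₂ * ‖y₂ - (p + a₂ • (u - p))‖ := by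
        rw [norm_smul, Real.norm_eq_abs, abs_of_nonneg hc₂]
      have htri := norm_add_le (c₁ • (y₁ - (p + a₁ • (u - p)))) (c₂ • (y₂ - (p + a₂ • (u - p))))
      rw [hn1, hn2] at htri
      have hle1 : c₁ * ‖y₁ - (p + a₁ • (u - p))‖ ≤ c₁ * (a₁ * δ) :=
        mul_le_mul_of_nonneg_left hy₁.le hc₁
      have hle2 : c₂ * ‖y₂ - (p + a₂ • (u - p))‖ ≤ c₂ * (a₂ * δ) :=
        mul_le_mul_of_nonneg_left hy₂.le hc₂
      rcases lt_or_ge 0 c₁ with h | h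
      · have hstrict : c₁ * ‖y₁ - (p + a₁ • (u - p))‖ < c₁ * (a₁ * δ) :=
          mul_lt_mul_of_pos_left hy₁ h
        calc ‖_ + _‖ ≤ _ := htri
          _ < c₁ * (a₁ * δ) + c₂ * (a₂ * δ) := by linarith
          _ = (c₁ * a₁ + c₂ * a₂) * δ := by ring
      · have hc₁0 : c₁ = 0 := le_antisymm h hc₁
        have hc₂' : (0:ℝ) < c₂ := by rw [hc₁0] at hc; linarith
        have hstrict : c₂ * ‖y₂ - (p + a₂ • (u - p))‖ < c₂ * (a₂ * δ) :=
          mul_lt_mul_of_pos_left hy₂ hc₂'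
        calc ‖_ + _‖ ≤ _ := htri
          _ < c₁ * (a₁ * δ) + c₂ * (a₂ * δ) := by linarith
          _ = (c₁ * a₁ + c₂ * a₂) * δ := by ring
    -- the cone avoids every line
    have hKline : ∀ y ∈ K, ∀ i, (inner ℝ y (s i).2 : ℝ) ≠ (s i).1 := by
      rintro y ⟨a, ha, hy⟩ i hyi
      rw [mem_ball, dist_eq_norm] at hy
      have hxy : y - (p + a • (u - p)) = a • ((p + a⁻¹ • (y - p)) - u) := by
        match_scalars <;> field_simp <;> ring
      have hx : (p + a⁻¹ • (y - p)) ∈ ball u δ := by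
        rw [mem_ball, dist_eq_norm]
        rw [hxy, norm_smul, Real.norm_eq_abs, abs_of_pos ha] at hy
        exact (mul_lt_mul_iff_right₀ ha).mp hy
      apply hB _ hx i
      rw [inner_add_left, real_inner_smul_left, inner_sub_left, hpline i, hyi]
      ring
    -- the cone (intersected with the disk) lies in the connected component of u
    have huK : u ∈ K ∩ ball (0:E) 1 := by
      refine ⟨⟨1, one_pos, ?_⟩, hu.1⟩
      rw [mem_ball]
      have h1 : p + (1:ℝ) • (u - p) = u := by module
      rw [h1]
      simpa using hδ
    have hsub : K ∩ ball (0:E) 1 ⊆ ball (0:E) 1 \ ⋃ i, H i := by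
      rintro x ⟨hxK, hx1⟩
      refine ⟨hx1, ?_⟩
      rw [Set.mem_iUnion]
      rintro ⟨i, hxi⟩
      rw [hH i] at hxi
      exact hKline x hxK i hxi.2
    have hcomp : K ∩ ball (0:E) 1 ⊆ connectedComponentIn (ball (0:E) 1 \ ⋃ i, H i) u :=
      (hKconv.inter (convex_ball (0:E) 1)).isPreconnected.subset_connectedComponentIn huK hsub
    -- conclusion
    refine ⟨z, mem_sphere_zero_iff_norm.mpr hσ, σ * δ, by positivity, ?_⟩
    intro w hw hwz
    have hwK : w ∈ K := by
      refine ⟨σ, hσpos, ?_⟩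
      rw [mem_ball, dist_eq_norm]
      exact hwz
    have hwcl : w ∈ closure (K ∩ ball (0:E) 1) := by
      apply hKopen.inter_closure
      refine ⟨hwK, ?_⟩
      rw [closure_ball (0:E) one_ne_zero]
      exact sphere_subset_closedBall hw
    exact closure_mono hcomp hwcl
end
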